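/- Let V be an m-dimensional F_2-vector space and P : V → F_2 with P(0) = 0 and combinatorial degree 3. Then there exists a doubly even binary linear code C and an isomorphism φ : V → C of F_2-vector spaces such that P(v) ≡ |φ(v)|/4 (mod 2) for all v ∈ V. -/

import Mathlib

open Finset

/-- Hamming weight of a vector in `F_2^n`. -/
def wt {n : ℕ} (v : Fin n → ZMod 2) : ℕ :=
  (Finset.univ.filter fun i => v i = 1).card

/-- The `s`-th derived form of `P`. -/
def derForm {V : Type*} [AddCommMonoid V] (P : V → ZMod 2) (s : ℕ)
    (v : Fin s → V) : ZMod 2 :=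
  ∑ J : Finset (Fin s), P (∑ j ∈ J, v j)

namespace CG

lemma zmod2_cases (z : ZMod 2) : z = 0 ∨ z = 1 := by
  have h : ∀ w : ZMod 2, w = 0 ∨ w = 1 := by decide
  exact h z

variable {ι : Type*} [DecidableEq ι]

lemma count_between (S K : Finset ι) (hK : K ⊆ S) :
    (S.powerset.filter fun T => K ⊆ T).card = 2 ^ (S.card - K.card) := by
  rw [← Finset.card_sdiff_of_subset hK, ← Finset.card_powerset]
  apply Finset.card_bij' (fun T _ => T \ K) (fun U _ => U ∪ K)
  · intro T hT
    simp only [mem_filter, mem_powerset] at hT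
    simp only [mem_powerset]
    exact sdiff_subset_sdiff hT.1 (le_refl K)
  · intro U hU
    simp only [mem_powerset] at hU
    simp only [mem_filter, mem_powerset]
    refine ⟨union_subset (hU.trans (sdiff_subset)) hK, subset_union_right⟩
  · intro T hT
    simp only [mem_filter, mem_powerset] at hT
    exact sdiff_union_of_subset hT.2
  · intro U hU
    simp only [mem_powerset] at hU
    rw [union_sdiff_right, Finset.sdiff_eq_self_iff_disjoint.mpr (Finset.sdiff_disjoint.mono_left hU)]

lemma inversion (f : Finset ι → ZMod 2) (S : Finset ι) :
    ∑ T ∈ S.powerset, ∑ K ∈ T.powerset, f K = f S := by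
  have h : ∑ T ∈ S.powerset, ∑ K ∈ T.powerset, f K
      = ∑ K ∈ S.powerset, ∑ T ∈ S.powerset.filter (fun T => K ⊆ T), f K := by
    apply Finset.sum_comm'
    intro T K
    simp only [mem_powerset, mem_filter]
    constructor
    · intro h'; tauto
    · intro h'
      have h1 : K ⊆ T := by tauto
      have h2 : T ⊆ S := by tauto
      exact ⟨h2, h1⟩
  rw [h]
  rw [Finset.sum_eq_single_of_mem S (by simp)]
  · rw [Finset.sum_const, count_between S S (le_refl S), Nat.sub_self, pow_zero, one_smul]
  · intro K hK hKS
    rw [Finset.sum_const, count_between S K (mem_powerset.mp hK)]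
    have h1 : 1 ≤ S.card - K.card := by
      have := Finset.card_lt_card (lt_of_le_of_ne (mem_powerset.mp hK) hKS)
      omega
    obtain ⟨d, hd⟩ := Nat.exists_eq_add_of_le h1
    rw [hd, pow_add, pow_one, mul_comm, mul_smul, two_nsmul, CharTwo.add_self_eq_zero, smul_zero]



lemma derForm_powerset {V : Type*} [AddCommMonoid V] (P : V → ZMod 2) {m : ℕ} (b : Fin m → V)
    (T : Finset (Fin m)) :
    ∑ K ∈ T.powerset, P (∑ i ∈ K, b i)
      = derForm P T.card (fun j => b ((T.orderIsoOfFin rfl) j)) := by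
  classical
  set e := (T.orderIsoOfFin rfl).toEquiv with he
  have hinj : Function.Injective (fun j : Fin T.card => ((e j : {x // x ∈ T}) : Fin m)) :=
    Subtype.coe_injective.comp e.injective
  unfold derForm
  symm
  apply Finset.sum_bij' (i := fun (J : Finset (Fin T.card)) _ => J.map ⟨_, hinj⟩)
    (j := fun K _ => univ.filter fun j => ((e j : {x // x ∈ T}) : Fin m) ∈ K)
  · intro J _
    simp only [mem_powerset]
    intro x hx
    simp only [mem_map, Function.Embedding.coeFn_mk] at hx
    obtain ⟨j, _, rfl⟩ := hx
    exact (e j).2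
  · intro K _; exact mem_univ _
  · intro J _
    ext j
    simp [hinj.eq_iff]
  · intro K hK
    simp only [mem_powerset] at hK
    ext x
    simp only [mem_map, mem_filter, mem_univ, true_and, Function.Embedding.coeFn_mk]
    constructor
    · rintro ⟨j, hj, rfl⟩; exact hj
    · intro hx
      exact ⟨e.symm ⟨x, hK hx⟩, by simpa using hx, by simp⟩
  · intro J _
    rw [Finset.sum_map]
    rfl



def ind (z : ZMod 2) : ℕ := if z = 1 then 1 else 0

def pat : ℕ → ℕ → ℕ := fun t a =>
  match t, a with
  | 1,1 => 4 | 2,1 => 2 | 2,2 => 6 | 3,1 => 1 | 3,2 => 7 | 3,3 => 1 | _,_ => 0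

lemma block_cong {m : ℕ} (x : Fin m → ZMod 2) (T : Finset (Fin m)) (h1 : T.Nonempty)
    (h3 : T.card ≤ 3) :
    (∑ A ∈ T.powerset, pat T.card A.card * ind (∑ j ∈ A, x j)) % 8
      = (4 * ∏ i ∈ T, ind (x i)) % 8 := by
  have hc1 : 1 ≤ T.card := Finset.card_pos.mpr h1
  interval_cases h : T.card
  · obtain ⟨i, rfl⟩ := Finset.card_eq_one.mp h
    have hk : i ∉ (∅ : Finset (Fin m)) := by simp
    rw [show ({i} : Finset (Fin m)) = insert i ∅ from rfl, Finset.sum_powerset_insert hk]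
    simp only [Finset.powerset_empty, Finset.sum_singleton, insert_empty_eq,
      Finset.card_empty, Finset.card_singleton, Finset.sum_empty, Finset.prod_singleton]
    have hb : ∀ a : ZMod 2, (pat 1 0 * ind 0 + pat 1 1 * ind a) % 8 = 4 * ind a % 8 := by decide
    exact hb (x i)
  · obtain ⟨i, j, hij, rfl⟩ := Finset.card_eq_two.mp h
    have hi : i ∉ ({j} : Finset (Fin m)) := by simp [hij]
    have hk : j ∉ (∅ : Finset (Fin m)) := by simp
    rw [Finset.sum_powerset_insert hi,
      show ({j} : Finset (Fin m)) = insert j ∅ from rfl,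
      Finset.sum_powerset_insert hk, Finset.sum_powerset_insert hk]
    simp only [Finset.powerset_empty, Finset.sum_singleton, insert_empty_eq,
      Finset.card_empty, Finset.card_singleton, Finset.sum_empty,
      Finset.card_insert_of_notMem, Finset.sum_insert, Finset.prod_insert, hi,
      Finset.mem_singleton, hij, not_false_iff, Finset.prod_singleton, Nat.reduceAdd]
    have hb : ∀ a b : ZMod 2,
        (pat 2 0 * ind 0 + pat 2 1 * ind b + (pat 2 1 * ind a + pat 2 2 * ind (a + b))) % 8
          = (4 * (ind a * ind b)) % 8 := by decide
    exact hb (x i) (x j)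
  · obtain ⟨i, j, k, hij, hik, hjk, rfl⟩ := Finset.card_eq_three.mp h
    have hjk' : j ∉ ({k} : Finset (Fin m)) := by simp [hjk]
    have hi : i ∉ ({j, k} : Finset (Fin m)) := by simp [hij, hik]
    have hk : k ∉ (∅ : Finset (Fin m)) := by simp
    rw [Finset.sum_powerset_insert hi,
      Finset.sum_powerset_insert hjk', Finset.sum_powerset_insert hjk',
      show ({k} : Finset (Fin m)) = insert k ∅ from rfl,
      Finset.sum_powerset_insert hk, Finset.sum_powerset_insert hk,
      Finset.sum_powerset_insert hk, Finset.sum_powerset_insert hk]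
    simp only [Finset.powerset_empty, Finset.sum_singleton, insert_empty_eq,
      Finset.card_empty, Finset.card_singleton, Finset.sum_empty,
      Finset.card_insert_of_notMem, Finset.sum_insert, Finset.prod_insert,
      hjk', hi, Finset.mem_insert, Finset.mem_singleton, hij, hik, hjk,
      not_false_iff, or_self, or_false, false_or, Finset.prod_singleton, Nat.reduceAdd]
    have hb : ∀ a b c : ZMod 2,
      (pat 3 0 * ind 0 + pat 3 1 * ind c + (pat 3 1 * ind b + pat 3 2 * ind (b + c))
        + (pat 3 1 * ind a + pat 3 2 * ind (a + c) + (pat 3 2 * ind (a + b)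
          + pat 3 3 * ind (a + (b + c))))) % 8
        = (4 * (ind a * (ind b * ind c))) % 8 := by decide
    exact hb (x i) (x j) (x k)


end CG

theorem chein_goodaire {V : Type*} [AddCommGroup V] [Module (ZMod 2) V]
    [FiniteDimensional (ZMod 2) V] (P : V → ZMod 2) (hP : P 0 = 0)
    (hvanish : ∀ s, 3 < s → ∀ v : Fin s → V, derForm P s v = 0)
    (hne : ∃ v : Fin 3 → V, derForm P 3 v ≠ 0) :
    ∃ (n : ℕ) (C : Submodule (ZMod 2) (Fin n → ZMod 2)) (φ : V ≃ₗ[ZMod 2] C),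
      (∀ c ∈ C, 4 ∣ wt c) ∧
      ∀ v : V, 4 ∣ wt (φ v : Fin n → ZMod 2) ∧
        P v = ((wt (φ v : Fin n → ZMod 2) / 4 : ℕ) : ZMod 2) := by
  classical
  set m := Module.finrank (ZMod 2) V with hm
  set b := Module.finBasis (ZMod 2) V with hb
  set x : V → Fin m → ZMod 2 := fun v i => b.repr v i with hx
  set D : Finset (Fin m) → ZMod 2 := fun T => ∑ K ∈ T.powerset, P (∑ i ∈ K, b i) with hD
  have hD0 : D ∅ = 0 := by
    simp [hD, Finset.powerset_empty, hP]
  have hD3 : ∀ T : Finset (Fin m), 3 < T.card → D T = 0 := by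
    intro T hT
    show ∑ K ∈ T.powerset, P (∑ i ∈ K, b i) = 0
    rw [CG.derForm_powerset P (fun i => b i) T]
    exact hvanish T.card hT _
  set supp : V → Finset (Fin m) := fun v => univ.filter (fun i => x v i = 1) with hsupp
  have hv : ∀ v : V, v = ∑ i ∈ supp v, b i := by
    intro v
    conv_lhs => rw [← b.sum_repr v]
    rw [← Finset.sum_filter_of_ne (p := fun i => x v i = 1)]
    · apply Finset.sum_congr rfl
      intro i hi
      rw [Finset.mem_filter] at hi
      rw [show b.repr v i = x v i from rfl, hi.2, one_smul]
    · intro i _ hne'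
      rcases CG.zmod2_cases (b.repr v i) with h | h
      · have h' : (b.repr v) i = (0 : ZMod 2) := h
        exact absurd (by rw [h', zero_smul]) hne'
      · exact h
  have hPexp : ∀ v : V, ∑ T ∈ (supp v).powerset, D T = P v := by
    intro v
    conv_rhs => rw [hv v]
    exact CG.inversion (fun K => P (∑ i ∈ K, b i)) (supp v)
  set c : Finset (Fin m) → ℕ := fun T => if D T = 1 then 1 else 0 with hc
  set M : Finset (Fin m) → ℕ := fun A =>
    (if A.card = 1 then 8 else 0)
      + ∑ T : Finset (Fin m), c T * (if A ⊆ T then CG.pat T.card A.card else 0) with hM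
  set n := Fintype.card ((A : Finset (Fin m)) × Fin (M A)) with hn
  set eC : ((A : Finset (Fin m)) × Fin (M A)) ≃ Fin n := Fintype.equivFin _ with heC
  set ℓ : Finset (Fin m) → V →ₗ[ZMod 2] ZMod 2 := fun A => ∑ j ∈ A, b.coord j with hℓ
  have hℓa : ∀ A v, ℓ A v = ∑ j ∈ A, x v j := by
    intro A v
    show (∑ j ∈ A, b.coord j) v = _
    simp [LinearMap.sum_apply, Module.Basis.coord_apply, hx]
  set G : V →ₗ[ZMod 2] (Fin n → ZMod 2) := LinearMap.pi (fun i => ℓ (eC.symm i).1) with hG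
  have hGapp : ∀ v (col : (A : Finset (Fin m)) × Fin (M A)), G v (eC col) = ℓ col.1 v := by
    intro v col
    show (LinearMap.pi (fun i => ℓ (eC.symm i).1)) v (eC col) = _
    simp [LinearMap.pi_apply]
  have hwt : ∀ v : V, wt (G v) = ∑ A : Finset (Fin m), M A * CG.ind (ℓ A v) := by
    intro v
    rw [wt, Finset.card_filter]
    rw [← Equiv.sum_comp eC (fun i => if G v i = 1 then (1:ℕ) else 0)]
    rw [Finset.sum_congr rfl (fun col _ => by rw [hGapp v col])]
    rw [← Finset.univ_sigma_univ, Finset.sum_sigma]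
    apply Finset.sum_congr rfl
    intro A _
    by_cases h : ℓ A v = 1 <;> simp [CG.ind, h]
  have hkey : ∀ v : V, wt (G v) % 8
      = (4 * ∑ T : Finset (Fin m), c T * ∏ i ∈ T, CG.ind (x v i)) % 8 := by
    intro v
    rw [hwt v]
    have expand : ∀ A : Finset (Fin m), M A * CG.ind (ℓ A v)
        = 8 * ((if A.card = 1 then 1 else 0) * CG.ind (ℓ A v))
          + ∑ T : Finset (Fin m),
              c T * ((if A ⊆ T then CG.pat T.card A.card else 0) * CG.ind (ℓ A v)) := by
      intro A
      show ((if A.card = 1 then 8 else 0)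
        + ∑ T : Finset (Fin m), c T * (if A ⊆ T then CG.pat T.card A.card else 0))
          * CG.ind (ℓ A v) = _
      rw [add_mul, Finset.sum_mul]
      congr 1
      · by_cases h : A.card = 1 <;> simp [h]
      · apply Finset.sum_congr rfl; intro T _; ring
    rw [Finset.sum_congr rfl (fun A _ => expand A)]
    rw [Finset.sum_add_distrib, ← Finset.mul_sum, Finset.sum_comm]
    have blocksum : ∀ T : Finset (Fin m),
        ∑ A : Finset (Fin m),
            c T * ((if A ⊆ T then CG.pat T.card A.card else 0) * CG.ind (ℓ A v))
        = c T * ∑ A ∈ T.powerset, CG.pat T.card A.card * CG.ind (∑ j ∈ A, x v j) := by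
      intro T
      rw [← Finset.mul_sum]
      congr 1
      rw [Finset.sum_congr rfl (fun A _ => by rw [ite_mul, zero_mul, hℓa])]
      rw [← Finset.sum_filter]
      have hfil : univ.filter (fun A : Finset (Fin m) => A ⊆ T) = T.powerset := by
        ext A; simp [Finset.mem_powerset]
      rw [hfil]
    rw [Finset.sum_congr rfl (fun T _ => blocksum T)]
    rw [Nat.mul_add_mod]
    rw [Finset.sum_nat_mod]
    conv_rhs => rw [Finset.mul_sum, Finset.sum_nat_mod]
    congr 1
    apply Finset.sum_congr rfl
    intro T _
    by_cases hcT : c T = 1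
    · have hDT : D T = 1 := by
        by_contra hne'
        simp only [hc, if_neg hne'] at hcT
        exact absurd hcT one_ne_zero.symm
      have hTne : T.Nonempty := by
        rcases Finset.eq_empty_or_nonempty T with rfl | h
        · rw [hD0] at hDT; exact absurd hDT (by decide)
        · exact h
      have hT3 : T.card ≤ 3 := by
        by_contra hgt
        rw [hD3 T (by omega)] at hDT
        exact absurd hDT (by decide)
      rw [hcT, one_mul, one_mul]
      exact CG.block_cong (x v) T hTne hT3
    · have hcT0 : c T = 0 := by
        show (if D T = 1 then 1 else 0) = 0
        split
        · next h => exact absurd (by show c T = 1; simp [hc, h]) hcT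
        · rfl
      rw [hcT0, zero_mul, zero_mul, mul_zero]
  have hcast : ∀ v : V,
      ((∑ T : Finset (Fin m), c T * ∏ i ∈ T, CG.ind (x v i) : ℕ) : ZMod 2) = P v := by
    intro v
    push_cast
    have step : ∀ T : Finset (Fin m),
        ((c T : ZMod 2) * ∏ i ∈ T, (CG.ind (x v i) : ZMod 2))
          = D T * ∏ i ∈ T, x v i := by
      intro T
      congr 1
      · rcases CG.zmod2_cases (D T) with h | h
        · have h0 : c T = 0 := by
            simp only [hc, h]
            rw [if_neg (by decide)]
          rw [h0, h]; simp
        · have h1 : c T = 1 := by simp [hc, h]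
          rw [h1, h]; simp
      · apply Finset.prod_congr rfl
        intro i _
        rcases CG.zmod2_cases (x v i) with h | h <;> simp [h, CG.ind]
    rw [Finset.sum_congr rfl (fun T _ => step T)]
    have prodeq : ∀ T : Finset (Fin m),
        (∏ i ∈ T, x v i) = if T ⊆ supp v then 1 else 0 := by
      intro T
      split
      · next h =>
        apply Finset.prod_eq_one
        intro i hi
        have hmem := h hi
        rw [hsupp] at hmem
        simp only [Finset.mem_filter] at hmem
        exact hmem.2
      · next h =>
        obtain ⟨i, hi, hni⟩ := Finset.not_subset.mp h
        apply Finset.prod_eq_zero hi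
        rcases CG.zmod2_cases (x v i) with h' | h'
        · exact h'
        · exact absurd (by rw [hsupp]; simp [h']) hni
    rw [Finset.sum_congr rfl (fun T _ => by rw [prodeq T])]
    simp only [mul_ite, mul_one, mul_zero]
    rw [← Finset.sum_filter]
    have hfil : univ.filter (fun T : Finset (Fin m) => T ⊆ supp v) = (supp v).powerset := by
      ext A; simp [Finset.mem_powerset]
    rw [hfil, hPexp v]
  have hM1 : ∀ i : Fin m, 0 < M ({i} : Finset (Fin m)) := by
    intro i
    show 0 < (if ({i} : Finset (Fin m)).card = 1 then 8 else 0) + _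
    rw [Finset.card_singleton, if_pos rfl]
    omega
  have hinj : Function.Injective G := by
    rw [injective_iff_map_eq_zero]
    intro v hv0
    have hx0 : ∀ i : Fin m, x v i = 0 := by
      intro i
      have := congrFun hv0 (eC ⟨{i}, ⟨0, hM1 i⟩⟩)
      rw [hGapp v ⟨{i}, ⟨0, hM1 i⟩⟩] at this
      simpa [hℓa, Finset.sum_singleton] using this
    have hrepr : b.repr v = 0 := by
      ext i
      exact hx0 i
    exact (LinearEquiv.map_eq_zero_iff b.repr).mp hrepr
  refine ⟨n, LinearMap.range G, LinearEquiv.ofInjective G hinj, ?_, ?_⟩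
  · intro c' hc'
    obtain ⟨v, rfl⟩ := hc'
    have h8 := hkey v
    omega
  · intro v
    have hco : ((LinearEquiv.ofInjective G hinj v : LinearMap.range G) : Fin n → ZMod 2)
        = G v := rfl
    rw [hco]
    have h8 := hkey v
    refine ⟨by omega, ?_⟩
    rw [← hcast v]
    have hmod : (∑ T : Finset (Fin m), c T * ∏ i ∈ T, CG.ind (x v i))
        ≡ wt (G v) / 4 [MOD 2] := by
      unfold Nat.ModEq
      omega
    exact ((ZMod.natCast_eq_natCast_iff _ _ 2).mpr hmod).symm.symm ▸ rfl
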